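/- Let e > 0 be real and define sequences (a_ℓ), (b_ℓ) by b₀ = e - 6, a₀ = 2e + 6, b_{ℓ+1} = -b_ℓ²/a_ℓ, a_{ℓ+1} = 2a_ℓ + b_{ℓ+1}, and set r_ℓ = b_ℓ/a_ℓ. Then 0 ≤ r_{ℓ+1}² ≤ r_ℓ² for every ℓ ≥ 0, and r_ℓ² ≤ r₀² < 1 for every ℓ ≥ 0. -/

import Mathlib

/-- For the coupled sequences b₀ = e - 6, a₀ = 2e + 6, b_{ℓ+1} = -b_ℓ²/a_ℓ,
a_{ℓ+1} = 2a_ℓ + b_{ℓ+1} with r_ℓ = b_ℓ/a_ℓ: the squares r_ℓ² decrease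
monotonically, and r_ℓ² ≤ r₀² < 1 for all ℓ. -/
theorem seq_r_sq_decreasing (e : ℝ) (he : 0 < e) (a b r : ℕ → ℝ)
    (hb0 : b 0 = e - 6) (ha0 : a 0 = 2*e + 6)
    (hb : ∀ ℓ, b (ℓ+1) = -((b ℓ)^2) / a ℓ)
    (ha : ∀ ℓ, a (ℓ+1) = 2 * a ℓ + b (ℓ+1))
    (hr : ∀ ℓ, r ℓ = b ℓ / a ℓ) :
    (∀ ℓ, 0 ≤ (r (ℓ+1))^2 ∧ (r (ℓ+1))^2 ≤ (r ℓ)^2) ∧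
    (∀ ℓ, (r ℓ)^2 ≤ (r 0)^2) ∧ (r 0)^2 < 1 := by
  have key : ∀ ℓ, 0 < a ℓ ∧ (b ℓ)^2 < (a ℓ)^2 := by
    intro ℓ
    induction ℓ with
    | zero =>
      rw [hb0, ha0]
      constructor
      · linarith
      · nlinarith
    | succ n ih =>
      obtain ⟨hap, hlt⟩ := ih
      have hane : a n ≠ 0 := ne_of_gt hap
      have h1 : b (n+1) * a n = -((b n)^2) := by
        rw [hb n]; field_simp
      have h2 : a (n+1) * a n = 2 * (a n)^2 - (b n)^2 := by
        rw [ha n, hb n]; field_simp; ring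
      have hap1 : 0 < a (n+1) := by nlinarith
      constructor
      · exact hap1
      · nlinarith [sq_nonneg (b n), sq_nonneg (b (n+1)), sq_nonneg (a n)]
  have mono : ∀ ℓ, (r (ℓ+1))^2 ≤ (r ℓ)^2 := by
    intro n
    obtain ⟨hap, hlt⟩ := key n
    obtain ⟨hap1, _⟩ := key (n+1)
    have hane : a n ≠ 0 := ne_of_gt hap
    have h1 : b (n+1) * a n = -((b n)^2) := by
      rw [hb n]; field_simp
    have h2 : a (n+1) * a n = 2 * (a n)^2 - (b n)^2 := by
      rw [ha n, hb n]; field_simp; ring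
    have hap2 : (0:ℝ) < (a n)^2 := by positivity
    have h1s : (b (n+1))^2 * (a n)^2 = (b n)^4 := by
      rw [← mul_pow, h1]; ring
    have h2s : (a (n+1))^2 * (a n)^2 = (2*(a n)^2 - (b n)^2)^2 := by
      rw [← mul_pow, h2]
    have hfac : 0 ≤ (b n)^2 * (((a n)^2 - (b n)^2) * (4*(a n)^2 - (b n)^2)) := by
      apply mul_nonneg (sq_nonneg _)
      apply mul_nonneg (by linarith) (by nlinarith [sq_nonneg (b n)])
    have h3 : (b n)^4 * (a n)^2 ≤ (b n)^2 * (2*(a n)^2 - (b n)^2)^2 := by nlinarith [hfac]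
    rw [hr (n+1), hr n, div_pow, div_pow, div_le_div_iff₀ (by positivity) (by positivity),
      ← mul_le_mul_iff_of_pos_right hap2]
    have h1s' : (b (n+1))^2 * (a n)^2 * (a n)^2 = (b n)^4 * (a n)^2 := by rw [h1s]
    have h2s' : (b n)^2 * (a (n+1))^2 * (a n)^2 = (b n)^2 * (2*(a n)^2 - (b n)^2)^2 := by
      rw [mul_assoc, h2s]
    linarith [h1s', h2s', h3]
  refine ⟨fun ℓ => ⟨sq_nonneg _, mono ℓ⟩, ?_, ?_⟩
  · intro ℓ
    induction ℓ with
    | zero => exact le_refl _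
    | succ n ih => exact le_trans (mono n) ih
  · obtain ⟨hap, hlt⟩ := key 0
    rw [hr 0, div_pow, div_lt_one (by positivity)]
    exact hlt
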